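/- arXiv:math/0506342 — 5 statements merged into one kernel-verified Lean document; each statement's English description precedes it below -/
import Mathlib

section
/- Let Z be a real-valued random variable with Gaussian distribution N(μ, σ²), σ > 0. If λ ≥ 2|μ| and λ² ≥ 2σ², then P(|Z| > λ) ≤ (5λ/σ) · exp(−λ²/(8σ²)). -/
open MeasureTheory ProbabilityTheory Real Set Filter

lemma exp_neg_mul_integral_Ioi {b : ℝ} (t : ℝ) (hb : 0 < b) :
    ∫ x in Ioi t, Real.exp (-b * x) = Real.exp (-b * t) / b := by
  have hderiv : ∀ x ∈ Ici t, HasDerivAt (fun x => -(Real.exp (-b * x) / b))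
      (Real.exp (-b * x)) x := by
    intro x _
    have h1 : HasDerivAt (fun x : ℝ => -b * x) (-b) x := by
      simpa using (hasDerivAt_id x).const_mul (-b)
    have h2 := (Real.hasDerivAt_exp (-b * x)).comp x h1
    have h3 := (h2.div_const b).neg
    have h4 : HasDerivAt (fun x => -(Real.exp (-b * x) / b)) (-(Real.exp (-b * x) * -b / b)) x := h3
    convert h4 using 1
    field_simp
  have htend : Tendsto (fun x => -(Real.exp (-b * x) / b)) atTop (nhds 0) := by
    have h1 : Tendsto (fun x : ℝ => -b * x) atTop atBot := by
      have h := (tendsto_id : Tendsto (id : ℝ → ℝ) atTop atTop).const_mul_atTop hb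
      have h' := tendsto_neg_atTop_atBot.comp h
      simpa [Function.comp_def, neg_mul] using h'
    have h2 : Tendsto (fun x : ℝ => Real.exp (-b * x)) atTop (nhds 0) := by
      have := Real.tendsto_exp_atBot.comp h1
      simpa [Function.comp_def] using this
    simpa using (h2.div_const b).neg
  have := integral_Ioi_of_hasDerivAt_of_tendsto' hderiv
    (exp_neg_integrableOn_Ioi t hb) htend
  rw [this]; ring

lemma gaussian_tail_bound {μ σ t : ℝ} (hσ : 0 < σ) (ht : μ < t) :
    gaussianReal μ ⟨σ ^ 2, sq_nonneg σ⟩ {x | t ≤ x} ≤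
      ENNReal.ofReal (σ / (t - μ) * Real.exp (-(t - μ) ^ 2 / (2 * σ ^ 2))) := by
  set v : NNReal := ⟨σ ^ 2, sq_nonneg σ⟩ with hv_def
  have hvr : (v : ℝ) = σ ^ 2 := rfl
  have hv : v ≠ 0 := by
    rw [ne_eq, ← NNReal.coe_eq_zero, hvr]
    positivity
  rw [gaussianReal_apply_eq_integral _ hv]
  apply ENNReal.ofReal_le_ofReal
  have hset : {x : ℝ | t ≤ x} = Ici t := rfl
  rw [hset, integral_Ici_eq_integral_Ioi]
  set b : ℝ := (t - μ) / σ ^ 2 with hb_def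
  have htμ : 0 < t - μ := by linarith
  have hσ2 : (0 : ℝ) < σ ^ 2 := by positivity
  have hb : 0 < b := div_pos htμ hσ2
  set K : ℝ := (Real.sqrt (2 * π * σ ^ 2))⁻¹ *
    Real.exp (-(t - μ) ^ 2 / (2 * σ ^ 2) + b * t) with hK_def
  have hsqrt_pos : 0 < Real.sqrt (2 * π * σ ^ 2) := by
    apply Real.sqrt_pos.2
    have := Real.pi_pos
    positivity
  have hbound : ∀ x ∈ Ioi t, gaussianPDFReal μ v x ≤ K * Real.exp (-b * x) := by
    intro x hx
    have hx' : t < x := hx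
    have key : gaussianPDFReal μ v x
        = (Real.sqrt (2 * π * σ ^ 2))⁻¹ * Real.exp (-(x - μ) ^ 2 / (2 * σ ^ 2)) := by
      rw [gaussianPDFReal, hvr]
    have hK : K * Real.exp (-b * x)
        = (Real.sqrt (2 * π * σ ^ 2))⁻¹ *
          Real.exp (-(t - μ) ^ 2 / (2 * σ ^ 2) + b * t + -b * x) := by
      rw [hK_def, Real.exp_add (-(t - μ) ^ 2 / (2 * σ ^ 2) + b * t) (-b * x)]
      ring
    rw [key, hK]
    apply mul_le_mul_of_nonneg_left _ (by positivity)
    apply Real.exp_le_exp.2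
    have step : -(x - μ) ^ 2 / (2 * σ ^ 2)
        ≤ (-(t - μ) ^ 2 - 2 * (t - μ) * (x - t)) / (2 * σ ^ 2) := by
      gcongr
      nlinarith [sq_nonneg (x - t)]
    refine step.trans_eq ?_
    rw [hb_def]
    field_simp
    ring
  have hint1 : IntegrableOn (gaussianPDFReal μ v) (Ioi t) :=
    (integrable_gaussianPDFReal μ v).integrableOn
  have hint2 : IntegrableOn (fun x => K * Real.exp (-b * x)) (Ioi t) :=
    (exp_neg_integrableOn_Ioi t hb).const_mul K
  have h2pi : (1 : ℝ) ≤ Real.sqrt (2 * π) := by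
    rw [show (1 : ℝ) = Real.sqrt 1 by simp]
    exact Real.sqrt_le_sqrt (by nlinarith [Real.pi_gt_three])
  have hsqrt_ge : σ ≤ Real.sqrt (2 * π * σ ^ 2) := by
    rw [Real.sqrt_mul (by positivity : (0:ℝ) ≤ 2 * π), Real.sqrt_sq hσ.le]
    nlinarith [h2pi, hσ]
  have hinv : (Real.sqrt (2 * π * σ ^ 2))⁻¹ ≤ σ⁻¹ := inv_anti₀ hσ hsqrt_ge
  have hbb : (Real.sqrt (2 * π * σ ^ 2))⁻¹ / b ≤ σ / (t - μ) := by
    rw [hb_def, div_div_eq_mul_div]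
    gcongr
    have hss : σ⁻¹ * σ ^ 2 = σ := by field_simp
    calc (Real.sqrt (2 * π * σ ^ 2))⁻¹ * σ ^ 2
        ≤ σ⁻¹ * σ ^ 2 := mul_le_mul_of_nonneg_right hinv (by positivity)
      _ = σ := hss
  calc ∫ x in Ioi t, gaussianPDFReal μ v x
      ≤ ∫ x in Ioi t, K * Real.exp (-b * x) := by
        apply setIntegral_mono_on hint1 hint2 measurableSet_Ioi hbound
    _ = K * (Real.exp (-b * t) / b) := by
        rw [integral_const_mul, exp_neg_mul_integral_Ioi t hb]
    _ = (Real.sqrt (2 * π * σ ^ 2))⁻¹ / b * Real.exp (-(t - μ) ^ 2 / (2 * σ ^ 2)) := by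
        have hrg : (Real.sqrt (2 * π * σ ^ 2))⁻¹ *
            (Real.exp (-(t - μ) ^ 2 / (2 * σ ^ 2)) * Real.exp (b * t)) *
            (Real.exp (-b * t) / b)
            = (Real.sqrt (2 * π * σ ^ 2))⁻¹ / b * Real.exp (-(t - μ) ^ 2 / (2 * σ ^ 2)) *
              (Real.exp (b * t) * Real.exp (-b * t)) := by ring
        rw [hK_def, Real.exp_add, hrg, ← Real.exp_add,
          show b * t + -b * t = 0 by ring, Real.exp_zero, mul_one]
    _ ≤ σ / (t - μ) * Real.exp (-(t - μ) ^ 2 / (2 * σ ^ 2)) :=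
        mul_le_mul_of_nonneg_right hbb (Real.exp_nonneg _)

lemma term_bound {σ lam m : ℝ} (hσ : 0 < σ) (hlam : 0 < lam) (hm : lam / 2 ≤ lam - m) :
    σ / (lam - m) * Real.exp (-(lam - m) ^ 2 / (2 * σ ^ 2)) ≤
      2 * σ / lam * Real.exp (-lam ^ 2 / (8 * σ ^ 2)) := by
  have hpos : 0 < lam - m := lt_of_lt_of_le (by linarith) hm
  have hsq : (lam / 2) ^ 2 ≤ (lam - m) ^ 2 := pow_le_pow_left₀ (by positivity) hm 2
  have hσ2 : (0 : ℝ) < σ ^ 2 := by positivity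
  apply mul_le_mul
  · rw [div_le_div_iff₀ hpos hlam]; nlinarith
  · apply Real.exp_le_exp.2
    have h1 : lam ^ 2 / (8 * σ ^ 2) ≤ (lam - m) ^ 2 / (2 * σ ^ 2) := by
      rw [div_le_div_iff₀ (by positivity) (by positivity)]
      nlinarith [hsq, hσ2]
    have h2 : -(lam - m) ^ 2 / (2 * σ ^ 2) = -((lam - m) ^ 2 / (2 * σ ^ 2)) := by ring
    have h3 : -lam ^ 2 / (8 * σ ^ 2) = -(lam ^ 2 / (8 * σ ^ 2)) := by ring
    rw [h2, h3]; linarith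
  · exact Real.exp_nonneg _
  · positivity

/-- Modified Mill's inequality (Lemma 7.1, part 1): if `Z ~ N(μ, σ²)`, `λ ≥ 2|μ|` and
`λ² ≥ 2σ²`, then `P(|Z| > λ) ≤ (5λ/σ) exp(−λ²/(8σ²))`. -/
theorem mills_modified_hard {Ω : Type*} [MeasurableSpace Ω] (P : Measure Ω)
    [IsProbabilityMeasure P] (Z : Ω → ℝ) (μ σ lam : ℝ) (hσ : 0 < σ)
    (hZ : Measure.map Z P = gaussianReal μ ⟨σ ^ 2, sq_nonneg σ⟩)
    (hlam_mean : 2 * |μ| ≤ lam) (hlam_var : 2 * σ ^ 2 ≤ lam ^ 2) :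
    P {ω | |Z ω| > lam} ≤
      ENNReal.ofReal (5 * lam / σ * Real.exp (-lam ^ 2 / (8 * σ ^ 2))) := by
  set v : NNReal := ⟨σ ^ 2, sq_nonneg σ⟩ with hv_def
  have habs : 0 ≤ |μ| := abs_nonneg μ
  have hlam0 : 0 < lam := by nlinarith [sq_nonneg lam]
  have hZm : AEMeasurable Z P := aemeasurable_of_map_neZero (by rw [hZ]; infer_instance)
  have hmset : MeasurableSet {x : ℝ | lam < |x|} :=
    measurableSet_lt measurable_const measurable_abs
  have hmap : P {ω | |Z ω| > lam} = gaussianReal μ v {x | lam < |x|} := by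
    rw [← hZ, Measure.map_apply_of_aemeasurable hZm hmset]
    rfl
  rw [hmap]
  have hsubset : {x : ℝ | lam < |x|} ⊆ {x : ℝ | lam ≤ x} ∪ {x : ℝ | x ≤ -lam} := by
    intro x hx
    have hx' : lam < |x| := hx
    rcases lt_abs.mp hx' with h | h
    · exact Or.inl h.le
    · exact Or.inr (by simp only [Set.mem_setOf_eq]; linarith)
  have hμlt : μ < lam := by
    have : μ ≤ |μ| := le_abs_self μ
    linarith
  have hμlt' : -μ < lam := by
    have : -μ ≤ |μ| := neg_le_abs μ
    linarith
  have h1 : gaussianReal μ v {x | lam ≤ x} ≤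
      ENNReal.ofReal (σ / (lam - μ) * Real.exp (-(lam - μ) ^ 2 / (2 * σ ^ 2))) :=
    gaussian_tail_bound hσ hμlt
  have hlow_eq : gaussianReal μ v {x : ℝ | x ≤ -lam} = gaussianReal (-μ) v {x : ℝ | lam ≤ x} := by
    have hmap_neg : (gaussianReal μ v).map ((-1 : ℝ) * ·) = gaussianReal (-μ) v := by
      rw [gaussianReal_map_const_mul]
      congr 1
      · ring
      · ext
        simp
    have hmeas : Measurable fun x : ℝ => (-1 : ℝ) * x := by fun_prop
    have hs : MeasurableSet {x : ℝ | lam ≤ x} := measurableSet_Ici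
    rw [← hmap_neg, Measure.map_apply hmeas hs]
    congr 1
    ext x
    simp only [Set.mem_preimage, Set.mem_setOf_eq]
    constructor <;> intro h <;> linarith
  have h2 : gaussianReal μ v {x : ℝ | x ≤ -lam} ≤
      ENNReal.ofReal (σ / (lam - (-μ)) * Real.exp (-(lam - (-μ)) ^ 2 / (2 * σ ^ 2))) := by
    rw [hlow_eq]
    exact gaussian_tail_bound hσ hμlt'
  have hmono1 : lam / 2 ≤ lam - μ := by
    have : μ ≤ |μ| := le_abs_self μ
    linarith
  have hmono2 : lam / 2 ≤ lam - (-μ) := by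
    have : -μ ≤ |μ| := neg_le_abs μ
    linarith
  have ht1 := term_bound hσ hlam0 hmono1
  have ht2 := term_bound hσ hlam0 hmono2
  calc gaussianReal μ v {x | lam < |x|}
      ≤ gaussianReal μ v ({x : ℝ | lam ≤ x} ∪ {x : ℝ | x ≤ -lam}) := measure_mono hsubset
    _ ≤ gaussianReal μ v {x : ℝ | lam ≤ x} + gaussianReal μ v {x : ℝ | x ≤ -lam} :=
        measure_union_le _ _
    _ ≤ ENNReal.ofReal (σ / (lam - μ) * Real.exp (-(lam - μ) ^ 2 / (2 * σ ^ 2)))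
        + ENNReal.ofReal (σ / (lam - (-μ)) * Real.exp (-(lam - (-μ)) ^ 2 / (2 * σ ^ 2))) :=
        add_le_add h1 h2
    _ = ENNReal.ofReal (σ / (lam - μ) * Real.exp (-(lam - μ) ^ 2 / (2 * σ ^ 2))
        + σ / (lam - (-μ)) * Real.exp (-(lam - (-μ)) ^ 2 / (2 * σ ^ 2))) := by
        rw [ENNReal.ofReal_add]
        · have hp : 0 < lam - μ := by linarith
          positivity
        · have hp : 0 < lam - (-μ) := by linarith
          positivity
    _ ≤ ENNReal.ofReal (5 * lam / σ * Real.exp (-lam ^ 2 / (8 * σ ^ 2))) := by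
        apply ENNReal.ofReal_le_ofReal
        have hsum : σ / (lam - μ) * Real.exp (-(lam - μ) ^ 2 / (2 * σ ^ 2))
            + σ / (lam - (-μ)) * Real.exp (-(lam - (-μ)) ^ 2 / (2 * σ ^ 2))
            ≤ 4 * σ / lam * Real.exp (-lam ^ 2 / (8 * σ ^ 2)) := by
          have h4 : (4 : ℝ) * σ / lam = 2 * σ / lam + 2 * σ / lam := by ring
          rw [h4, add_mul]
          exact add_le_add ht1 ht2
        refine hsum.trans ?_
        apply mul_le_mul_of_nonneg_right _ (Real.exp_nonneg _)
        rw [div_le_div_iff₀ hlam0 hσ]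
        nlinarith
end

section
/- Let Y ∈ ℝⁿ, let X be a real n × (d+1) matrix, and let W : ℝ → (n × n real matrices) be differentiable at h₀ with derivative W′(h₀). Suppose the matrix XᵀW(h₀)X is invertible. Define m̂(h) = e₁ᵀ (XᵀW(h)X)⁻¹ XᵀW(h) Y, where e₁ = (1,0,…,0)ᵀ ∈ ℝ^{d+1}. Then h ↦ m̂(h) is differentiable at h₀ with derivative m̂′(h₀) = e₁ᵀ (XᵀW(h₀)X)⁻¹ Xᵀ W′(h₀) (Y − X α̂), where α̂ = (XᵀW(h₀)X)⁻¹ XᵀW(h₀) Y. -/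
open Matrix

attribute [local instance] Matrix.linftyOpNormedAddCommGroup Matrix.linftyOpNormedSpace
  Matrix.linftyOpNormedRing Matrix.linftyOpNormedAlgebra

/-- Derivative of the local linear estimator with respect to a bandwidth (Section 3):
if `m̂(h) = e₁ᵀ (XᵀW(h)X)⁻¹ XᵀW(h) Y` and `W` is differentiable at `h₀` with
`XᵀW(h₀)X` invertible, then `m̂′(h₀) = e₁ᵀ (XᵀW(h₀)X)⁻¹ Xᵀ W′(h₀) (Y − X α̂)` where
`α̂ = (XᵀW(h₀)X)⁻¹ XᵀW(h₀) Y`. -/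
theorem deriv_local_linear_estimator (n d : ℕ) (Y : Fin n → ℝ)
    (X : Matrix (Fin n) (Fin (d + 1)) ℝ)
    (W : ℝ → Matrix (Fin n) (Fin n) ℝ) (W' : Matrix (Fin n) (Fin n) ℝ) (h₀ : ℝ)
    (hW : ∀ i j, HasDerivAt (fun h => W h i j) (W' i j) h₀)
    (hinv : IsUnit (Xᵀ * W h₀ * X).det) :
    HasDerivAt (fun h => (((Xᵀ * W h * X)⁻¹ * (Xᵀ * W h)).mulVec Y) 0)
      ((((Xᵀ * W h₀ * X)⁻¹ * (Xᵀ * W')).mulVec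
        (Y - X.mulVec (((Xᵀ * W h₀ * X)⁻¹ * (Xᵀ * W h₀)).mulVec Y))) 0) h₀ := by
  set A₀ := Xᵀ * W h₀ * X with hA₀def
  -- derivative of W as a matrix-valued function
  have hWmat : HasDerivAt W W' h₀ := by
    have h1 : ∀ h, W h = ∑ i : Fin n, ∑ j : Fin n,
        (W h i j) • Matrix.single i j (1 : ℝ) := by
      intro h
      simp only [smul_single, smul_eq_mul, mul_one]
      exact matrix_eq_sum_single (W h)
    have h2 : W' = ∑ i : Fin n, ∑ j : Fin n,
        (W' i j) • Matrix.single i j (1 : ℝ) := by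
      simp only [smul_single, smul_eq_mul, mul_one]
      exact matrix_eq_sum_single W'
    rw [funext h1, h2]
    exact HasDerivAt.fun_sum fun i _ => HasDerivAt.fun_sum fun j _ =>
      (hW i j).smul_const _
  -- derivative of A h = Xᵀ * W h * X
  let L : Matrix (Fin n) (Fin n) ℝ →ₗ[ℝ] Matrix (Fin (d + 1)) (Fin (d + 1)) ℝ :=
    { toFun := fun M => Xᵀ * M * X
      map_add' := by intro M N; simp [Matrix.mul_add, Matrix.add_mul]
      map_smul' := by intro c M; simp [Matrix.mul_smul, Matrix.smul_mul] }
  have hA : HasDerivAt (fun h => Xᵀ * W h * X) (Xᵀ * W' * X) h₀ :=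
    (L.toContinuousLinearMap.hasFDerivAt).comp_hasDerivAt h₀ hWmat
  -- derivative of the inverse
  have hIsUnit : IsUnit A₀ := (Matrix.isUnit_iff_isUnit_det _).mpr hinv
  obtain ⟨u, hu⟩ := hIsUnit
  have hu1 : (↑u⁻¹ : Matrix (Fin (d + 1)) (Fin (d + 1)) ℝ) = A₀⁻¹ := by
    rw [Matrix.coe_units_inv, hu]
  have hInv : HasDerivAt (fun h => (Xᵀ * W h * X)⁻¹)
      (-(A₀⁻¹ * (Xᵀ * W' * X) * A₀⁻¹)) h₀ := by
    have hfd : HasFDerivAt Ring.inverse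
        (-(ContinuousLinearMap.mulLeftRight ℝ _ ↑u⁻¹ ↑u⁻¹)) ((fun h => Xᵀ * W h * X) h₀) := by
      rw [show (fun h => Xᵀ * W h * X) h₀ = (↑u : Matrix _ _ ℝ) from hu.symm]
      exact hasFDerivAt_ringInverse u
    have := hfd.comp_hasDerivAt h₀ hA
    simp only [Function.comp_def, Matrix.nonsing_inv_eq_ringInverse] at this ⊢
    refine this.congr_deriv ?_
    simp [hu1, ContinuousLinearMap.mulLeftRight_apply, ← Matrix.nonsing_inv_eq_ringInverse]
  -- entrywise derivatives of the inverse
  set Dm := -(A₀⁻¹ * (Xᵀ * W' * X) * A₀⁻¹) with hDm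
  have hg : ∀ j, HasDerivAt (fun h => (Xᵀ * W h * X)⁻¹ 0 j) (Dm 0 j) h₀ := by
    intro j
    let P : Matrix (Fin (d + 1)) (Fin (d + 1)) ℝ →ₗ[ℝ] ℝ :=
      { toFun := fun M => M 0 j
        map_add' := fun _ _ => rfl
        map_smul' := fun _ _ => rfl }
    exact (P.toContinuousLinearMap.hasFDerivAt).comp_hasDerivAt h₀ hInv
  -- entrywise derivative of h ↦ (Xᵀ W h).mulVec Y
  have hv : ∀ j, HasDerivAt (fun h => ((Xᵀ * W h).mulVec Y) j)
      (((Xᵀ * W').mulVec Y) j) h₀ := by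
    intro j
    simp only [Matrix.mulVec, Matrix.mul_apply, dotProduct]
    exact HasDerivAt.fun_sum fun i _ =>
      (HasDerivAt.fun_sum fun l _ => (hW l i).const_mul (Xᵀ j l)).mul_const (Y i)
  -- assemble
  have key : HasDerivAt (fun h => ∑ j, (Xᵀ * W h * X)⁻¹ 0 j * ((Xᵀ * W h).mulVec Y) j)
      (∑ j, (Dm 0 j * ((Xᵀ * W h₀).mulVec Y) j
        + (Xᵀ * W h₀ * X)⁻¹ 0 j * ((Xᵀ * W').mulVec Y) j)) h₀ :=
    HasDerivAt.fun_sum fun j _ => (hg j).mul (hv j)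
  have heq : (fun h => (((Xᵀ * W h * X)⁻¹ * (Xᵀ * W h)).mulVec Y) 0)
      = fun h => ∑ j, (Xᵀ * W h * X)⁻¹ 0 j * ((Xᵀ * W h).mulVec Y) j := by
    funext h
    rw [← Matrix.mulVec_mulVec]
    rfl
  rw [heq]
  convert key using 1
  rw [Finset.sum_add_distrib]
  have t1 : ∑ j, Dm 0 j * ((Xᵀ * W h₀).mulVec Y) j
      = ((Dm * (Xᵀ * W h₀)).mulVec Y) 0 := by
    conv_rhs => rw [← Matrix.mulVec_mulVec]
    rfl
  have t2 : ∑ j, (Xᵀ * W h₀ * X)⁻¹ 0 j * ((Xᵀ * W').mulVec Y) j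
      = ((A₀⁻¹ * (Xᵀ * W')).mulVec Y) 0 := by
    conv_rhs => rw [← Matrix.mulVec_mulVec]
    rfl
  rw [t1, t2, Matrix.mulVec_sub]
  simp only [Matrix.mulVec_mulVec, hDm, Matrix.neg_mul, Matrix.neg_mulVec, Pi.sub_apply,
    Pi.neg_apply, Matrix.mul_assoc]
  ring
end

section
/- Let K : ℝ^d → ℝ be nonnegative and integrable with ∫ v_j K(v) dv = 0 for all j, ∫ v_j v_k K(v) dv = ν₂ δ_{jk} for a constant ν₂ and all j,k, ∫ v_a v_b v_c K(v) dv = 0 for all triples (a,b,c), and with finite mixed fourth absolute moments ∫ |v_j v_a v_b v_c| K(v) dv < ∞. Let f : ℝ^d → ℝ be three times continuously differentiable with all third-order partial derivatives uniformly bounded in absolute value by M₃. Let h₁,…,h_d > 0 and H^{1/2} = diag(h₁,…,h_d). Then for every x ∈ ℝ^d and every j, | ∫ K(v) h_j v_j f(x + H^{1/2} v) dv − ν₂ h_j² ∂_j f(x) | ≤ (M₃/6) · h_j · Σ_{a,b,c=1}^d h_a h_b h_c ∫ |v_j v_a v_b v_c| K(v) dv. -/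
open MeasureTheory



lemma pi_single_expand {d : ℕ} (w : Fin d → ℝ) :
    w = ∑ a : Fin d, w a • (Pi.single a 1 : Fin d → ℝ) := by
  funext i
  simp [Pi.single_apply, Finset.sum_ite_eq]

lemma cmm_expand {d n : ℕ} (T : ContinuousMultilinearMap ℝ (fun _ : Fin n => (Fin d → ℝ)) ℝ)
    (w : Fin d → ℝ) :
    T (fun _ => w) = ∑ r : Fin n → Fin d,
      (∏ i, w (r i)) * T (fun i => (Pi.single (r i) 1 : Fin d → ℝ)) := by
  calc T (fun _ => w) = T (fun _ => ∑ a : Fin d, w a • (Pi.single a 1 : Fin d → ℝ)) := by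
        rw [← pi_single_expand]
    _ = ∑ r : Fin n → Fin d, T (fun i => w (r i) • (Pi.single (r i) 1 : Fin d → ℝ)) := by
        have := T.toMultilinearMap.map_sum
          (g := fun (_ : Fin n) (a : Fin d) => w a • (Pi.single a 1 : Fin d → ℝ))
        simpa [Fintype.piFinset_univ] using this
    _ = _ := by
        refine Finset.sum_congr rfl fun r _ => ?_
        have := T.toMultilinearMap.map_smul_univ (fun i => w (r i))
            (fun i => (Pi.single (r i) 1 : Fin d → ℝ))
        simpa [smul_eq_mul] using this

def tripleEquiv (d : ℕ) : (Fin d × Fin d × Fin d) ≃ (Fin 3 → Fin d) where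
  toFun p := ![p.1, p.2.1, p.2.2]
  invFun r := (r 0, r 1, r 2)
  left_inv p := rfl
  right_inv r := by funext i; fin_cases i <;> rfl

def pairEquiv (d : ℕ) : (Fin d × Fin d) ≃ (Fin 2 → Fin d) where
  toFun p := ![p.1, p.2]
  invFun r := (r 0, r 1)
  left_inv p := rfl
  right_inv r := by funext i; fin_cases i <;> rfl

lemma sum_fn3 {d : ℕ} (F : (Fin 3 → Fin d) → ℝ) :
    ∑ r : Fin 3 → Fin d, F r = ∑ a, ∑ b, ∑ c, F ![a, b, c] := by
  rw [← Fintype.sum_equiv (tripleEquiv d) (fun p : Fin d × Fin d × Fin d => F ![p.1, p.2.1, p.2.2]) F (fun p => rfl)]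
  rw [Fintype.sum_prod_type]
  simp [Fintype.sum_prod_type]

lemma sum_fn2 {d : ℕ} (F : (Fin 2 → Fin d) → ℝ) :
    ∑ r : Fin 2 → Fin d, F r = ∑ a, ∑ b, F ![a, b] := by
  rw [← Fintype.sum_equiv (pairEquiv d) (fun p : Fin d × Fin d => F ![p.1, p.2]) F (fun p => rfl)]
  rw [Fintype.sum_prod_type]
lemma cmm_expand3 {d : ℕ} (T : ContinuousMultilinearMap ℝ (fun _ : Fin 3 => (Fin d → ℝ)) ℝ)
    (w : Fin d → ℝ) :
    T (fun _ => w) = ∑ a, ∑ b, ∑ c, w a * w b * w c *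
      T ![(Pi.single a 1 : Fin d → ℝ), Pi.single b 1, Pi.single c 1] := by
  rw [cmm_expand, sum_fn3]
  refine Finset.sum_congr rfl fun a _ => Finset.sum_congr rfl fun b _ =>
    Finset.sum_congr rfl fun c _ => ?_
  have h1 : (fun i : Fin 3 => (Pi.single (![a,b,c] i) 1 : Fin d → ℝ)) =
      ![(Pi.single a 1 : Fin d → ℝ), Pi.single b 1, Pi.single c 1] := by
    funext i; fin_cases i <;> rfl
  rw [h1, Fin.prod_univ_three]
  simp

lemma cmm_expand2 {d : ℕ} (T : ContinuousMultilinearMap ℝ (fun _ : Fin 2 => (Fin d → ℝ)) ℝ)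
    (w : Fin d → ℝ) :
    T (fun _ => w) = ∑ a, ∑ b, w a * w b *
      T ![(Pi.single a 1 : Fin d → ℝ), Pi.single b 1] := by
  rw [cmm_expand, sum_fn2]
  refine Finset.sum_congr rfl fun a _ => Finset.sum_congr rfl fun b _ => ?_
  have h1 : (fun i : Fin 2 => (Pi.single (![a,b] i) 1 : Fin d → ℝ)) =
      ![(Pi.single a 1 : Fin d → ℝ), Pi.single b 1] := by
    funext i; fin_cases i <;> rfl
  rw [h1, Fin.prod_univ_two]
  simp

lemma clm_expand {d : ℕ} (L : (Fin d → ℝ) →L[ℝ] ℝ) (w : Fin d → ℝ) :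
    L w = ∑ a, w a * L (Pi.single a 1 : Fin d → ℝ) := by
  conv_lhs => rw [pi_single_expand w]
  rw [map_sum]
  simp [smul_eq_mul]

lemma tri_bound {d : ℕ} (f : (Fin d → ℝ) → ℝ) (M₃ : ℝ)
    (hM₃ : ∀ y a b c,
      |iteratedFDeriv ℝ 3 f y ![Pi.single a 1, Pi.single b 1, Pi.single c 1]| ≤ M₃)
    (w : Fin d → ℝ) (y : Fin d → ℝ) :
    |iteratedFDeriv ℝ 3 f y (fun _ => w)| ≤
      M₃ * ∑ a, ∑ b, ∑ c, |w a| * |w b| * |w c| := by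
  rw [cmm_expand3]
  calc |∑ a, ∑ b, ∑ c, w a * w b * w c *
      iteratedFDeriv ℝ 3 f y ![(Pi.single a 1 : Fin d → ℝ), Pi.single b 1, Pi.single c 1]|
      ≤ ∑ a, ∑ b, ∑ c, |w a * w b * w c *
        iteratedFDeriv ℝ 3 f y ![(Pi.single a 1 : Fin d → ℝ), Pi.single b 1, Pi.single c 1]| := by
        refine (Finset.abs_sum_le_sum_abs _ _).trans ?_
        refine Finset.sum_le_sum fun a _ => (Finset.abs_sum_le_sum_abs _ _).trans ?_
        exact Finset.sum_le_sum fun b _ => Finset.abs_sum_le_sum_abs _ _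
    _ ≤ ∑ a, ∑ b, ∑ c, |w a| * |w b| * |w c| * M₃ := by
        refine Finset.sum_le_sum fun a _ => Finset.sum_le_sum fun b _ =>
          Finset.sum_le_sum fun c _ => ?_
        rw [abs_mul, abs_mul, abs_mul]
        exact mul_le_mul_of_nonneg_left (hM₃ y a b c) (by positivity)
    _ = M₃ * ∑ a, ∑ b, ∑ c, |w a| * |w b| * |w c| := by
        simp_rw [Finset.mul_sum]
        exact Finset.sum_congr rfl fun a _ => Finset.sum_congr rfl fun b _ =>
          Finset.sum_congr rfl fun c _ => mul_comm _ _

lemma taylor2_bound {d : ℕ} (f : (Fin d → ℝ) → ℝ) (hf : ContDiff ℝ 3 f) (M₃ : ℝ)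
    (hM₃ : ∀ y a b c,
      |iteratedFDeriv ℝ 3 f y ![Pi.single a 1, Pi.single b 1, Pi.single c 1]| ≤ M₃)
    (x w : Fin d → ℝ) :
    |f (x + w) - f x - fderiv ℝ f x w - (1/2) * iteratedFDeriv ℝ 2 f x (fun _ => w)|
      ≤ M₃ / 6 * ∑ a, ∑ b, ∑ c, |w a| * |w b| * |w c| := by
  set A : ℝ → (Fin d → ℝ) := fun t => x + t • w with hA_def
  set G : ℕ → ℝ → ℝ := fun k t => iteratedFDeriv ℝ k f (A t) (fun _ => w) with hG_def
  have hA : ∀ t, HasDerivAt A w t := by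
    intro t
    simpa [hA_def] using ((hasDerivAt_id t).smul_const w).const_add x
  have hG : ∀ k, k < 3 → ∀ t, HasDerivAt (G k) (G (k+1) t) t := by
    intro k hk t
    have hdiff : Differentiable ℝ (iteratedFDeriv ℝ k f) :=
      hf.differentiable_iteratedFDeriv (by exact_mod_cast hk)
    have h1 : HasFDerivAt (iteratedFDeriv ℝ k f)
        (fderiv ℝ (iteratedFDeriv ℝ k f) (A t)) (A t) := (hdiff _).hasFDerivAt
    have h2 := h1.comp_hasDerivAt t (hA t)
    have h3 := (ContinuousMultilinearMap.apply ℝ (fun _ : Fin k => (Fin d → ℝ)) ℝ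
      (fun _ => w)).hasFDerivAt.comp_hasDerivAt t h2
    have h4 : G (k+1) t = (ContinuousMultilinearMap.apply ℝ (fun _ : Fin k => (Fin d → ℝ)) ℝ
        (fun _ => w)) ((fderiv ℝ (iteratedFDeriv ℝ k f) (A t)) w) := by
      simp only [hG_def, ContinuousMultilinearMap.apply_apply]
      exact iteratedFDeriv_succ_apply_left (fun _ => w)
    rw [h4]
    exact h3
  set g : ℝ → ℝ := fun t => f (A t) with hg_def
  have hg0 : G 0 = g := by
    funext t; simp [hG_def, hg_def]
  have hgC : ContDiff ℝ 3 g :=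
    hf.comp (contDiff_const.add (contDiff_id.smul contDiff_const))
  set s : Set ℝ := Set.Icc (0:ℝ) 1 with hs_def
  have hs : UniqueDiffOn ℝ s := uniqueDiffOn_Icc zero_lt_one
  have hids : ∀ k, k ≤ 3 → ∀ t ∈ s, iteratedDerivWithin k g s t = G k t := by
    intro k
    induction k with
    | zero => intro _ t ht; simp [iteratedDerivWithin_zero, hg0]
    | succ k IH =>
      intro hk t ht
      rw [iteratedDerivWithin_succ]
      have he : derivWithin (iteratedDerivWithin k g s) s t = derivWithin (G k) s t := by
        apply derivWithin_congr
        · exact fun y hy => IH (le_trans (Nat.le_succ k) hk) y hy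
        · exact IH (le_trans (Nat.le_succ k) hk) t ht
      rw [he]
      exact ((hG k (by omega) t).hasDerivWithinAt).derivWithin (hs t ht)
  have hIoo : Set.uIoo (0:ℝ) 1 = Set.Ioo 0 1 := by simp [Set.uIoo]
  obtain ⟨t', ht', heq⟩ := taylor_mean_remainder_lagrange (f := g) (x₀ := 0) (x := 1) (n := 2)
    zero_ne_one ((hgC.of_le (by norm_num)).contDiffOn)
    (by
      rw [Set.uIcc_of_le zero_le_one, hIoo]
      intro t ht
      have hts : t ∈ s := Set.Ioo_subset_Icc_self ht
      exact ((hG 2 (by norm_num) t).differentiableAt.differentiableWithinAt).congr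
        (fun y hy => hids 2 (by norm_num) y (Set.Ioo_subset_Icc_self hy)) (hids 2 (by norm_num) t hts))
  rw [Set.uIcc_of_le zero_le_one] at heq
  rw [hIoo] at ht'
  have h0s : (0:ℝ) ∈ s := by constructor <;> norm_num
  have hT : taylorWithinEval g 2 s 0 1 = G 0 0 + G 1 0 + (1/2) * G 2 0 := by
    rw [taylor_within_apply]
    rw [Finset.sum_range_succ, Finset.sum_range_succ, Finset.sum_range_one]
    rw [hids 0 (by norm_num) 0 h0s, hids 1 (by norm_num) 0 h0s, hids 2 (by norm_num) 0 h0s]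
    norm_num [Nat.factorial]
  rw [hT] at heq
  have ht's : t' ∈ s := Set.Ioo_subset_Icc_self ht'
  rw [hids 3 le_rfl t' ht's] at heq
  have hg1 : g 1 = f (x + w) := by simp [hg_def, hA_def]
  have hG00 : G 0 0 = f x := by simp [hG_def, hA_def]
  have hG10 : G 1 0 = fderiv ℝ f x w := by
    simp only [hG_def, hA_def, zero_smul, add_zero]
    exact iteratedFDeriv_one_apply _
  have hG20 : G 2 0 = iteratedFDeriv ℝ 2 f x (fun _ => w) := by
    simp [hG_def, hA_def]
  have key : f (x + w) - f x - fderiv ℝ f x w - (1/2) * iteratedFDeriv ℝ 2 f x (fun _ => w)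
      = G 3 t' / 6 := by
    rw [← hg1, ← hG00, ← hG10, ← hG20]
    have h2 := heq
    norm_num [Nat.factorial] at h2
    linarith
  rw [key]
  have := tri_bound f M₃ hM₃ w (A t')
  rw [abs_div]
  have h6 : |(6:ℝ)| = 6 := by norm_num
  rw [h6]
  calc |G 3 t'| / 6 ≤ (M₃ * ∑ a, ∑ b, ∑ c, |w a| * |w b| * |w c|) / 6 := by
        exact (div_le_div_iff_of_pos_right (by norm_num)).mpr this
    _ = M₃ / 6 * ∑ a, ∑ b, ∑ c, |w a| * |w b| * |w c| := by ring


/-- First-moment expansion (analysis of `A₂₁` in the proof of Theorem 5.1): for a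
nonnegative kernel `K` with zero odd moments, `∫ v_j v_k K = ν₂ δ_{jk}` and finite mixed
fourth absolute moments, and `f` three times continuously differentiable with third
partials bounded by `M₃`,
`|∫ K(v) h_j v_j f(x + H^{1/2}v) dv − ν₂ h_j² ∂_j f(x)|
   ≤ (M₃/6) h_j ∑_{a,b,c} h_a h_b h_c ∫ |v_j v_a v_b v_c| K(v) dv`. -/
theorem kernel_first_moment_expansion (d : ℕ) (K : (Fin d → ℝ) → ℝ)
    (hK_nonneg : ∀ v, 0 ≤ K v) (hK_int : Integrable K)
    (hK_mom1_int : ∀ j, Integrable (fun v => v j * K v))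
    (hK_mom1 : ∀ j, ∫ v, v j * K v = 0)
    (ν₂ : ℝ)
    (hK_mom2_int : ∀ j k, Integrable (fun v => v j * v k * K v))
    (hK_mom2 : ∀ j k, ∫ v, v j * v k * K v = if j = k then ν₂ else 0)
    (hK_mom3_int : ∀ a b c, Integrable (fun v => v a * v b * v c * K v))
    (hK_mom3 : ∀ a b c, ∫ v, v a * v b * v c * K v = 0)
    (hK_mom4_int : ∀ a b c e, Integrable (fun v => |v a * v b * v c * v e| * K v))
    (f : (Fin d → ℝ) → ℝ) (hf : ContDiff ℝ 3 f)
    (M₃ : ℝ)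
    (hM₃ : ∀ y a b c,
      |iteratedFDeriv ℝ 3 f y ![Pi.single a 1, Pi.single b 1, Pi.single c 1]| ≤ M₃)
    (h : Fin d → ℝ) (hh : ∀ j, 0 < h j) (x : Fin d → ℝ) (j : Fin d) :
    |(∫ v, K v * (h j * v j) * f (fun i => x i + h i * v i)) -
        ν₂ * (h j) ^ 2 * fderiv ℝ f x (Pi.single j 1)| ≤
      M₃ / 6 * h j * ∑ a, ∑ b, ∑ c,
        h a * h b * h c * ∫ v, |v j * v a * v b * v c| * K v := by
  classical
  have hM₃0 : 0 ≤ M₃ := le_trans (abs_nonneg _) (hM₃ x j j j)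
  set u : (Fin d → ℝ) → (Fin d → ℝ) := fun v i => h i * v i with hu_def
  set Df : Fin d → ℝ := fun a => fderiv ℝ f x (Pi.single a 1 : Fin d → ℝ) with hDf_def
  set D2 : Fin d → Fin d → ℝ := fun a b =>
    iteratedFDeriv ℝ 2 f x ![(Pi.single a 1 : Fin d → ℝ), Pi.single b 1] with hD2_def
  set R : (Fin d → ℝ) → ℝ := fun v => f (x + u v) - f x - fderiv ℝ f x (u v)
    - (1/2) * iteratedFDeriv ℝ 2 f x (fun _ => u v) with hR_def
  -- the three "polynomial" pieces
  set base : (Fin d → ℝ) → ℝ := fun v =>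
    (h j * f x) * (v j * K v)
    + (∑ a, (h j * h a * Df a) * (v j * v a * K v))
    + (∑ a, ∑ b, (1/2 * h j * h a * h b * D2 a b) * (v j * v a * v b * K v)) with hbase_def
  set rem : (Fin d → ℝ) → ℝ := fun v => K v * (h j * v j) * R v with hrem_def
  set maj : (Fin d → ℝ) → ℝ := fun v =>
    ∑ a, ∑ b, ∑ c, (M₃ / 6 * (h j * h a * h b * h c)) * (|v j * v a * v b * v c| * K v)
    with hmaj_def
  -- pointwise decomposition
  have hsplit : ∀ v, K v * (h j * v j) * f (fun i => x i + h i * v i) = base v + rem v := by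
    intro v
    have hx : (fun i => x i + h i * v i) = x + u v := rfl
    have hfd : fderiv ℝ f x (u v) = ∑ a, (h a * v a) * Df a := by
      rw [clm_expand (fderiv ℝ f x) (u v)]
    have hfd2 : iteratedFDeriv ℝ 2 f x (fun _ => u v)
        = ∑ a, ∑ b, (h a * v a) * (h b * v b) * D2 a b := by
      rw [cmm_expand2 (iteratedFDeriv ℝ 2 f x) (u v)]
    have hfu : f (x + u v) = f x + (∑ a, (h a * v a) * Df a)
        + (1/2) * (∑ a, ∑ b, (h a * v a) * (h b * v b) * D2 a b) + R v := by
      rw [hR_def, ← hfd, ← hfd2]; ring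
    set S1 : ℝ := ∑ a, (h a * v a) * Df a with hS1
    set S2 : ℝ := ∑ a, ∑ b, (h a * v a) * (h b * v b) * D2 a b with hS2
    have e2 : K v * (h j * v j) * S1
        = ∑ a, (h j * h a * Df a) * (v j * v a * K v) := by
      rw [hS1, Finset.mul_sum]
      exact Finset.sum_congr rfl fun a _ => by ring
    have e3 : K v * (h j * v j) * ((1/2) * S2)
        = ∑ a, ∑ b, (1/2 * h j * h a * h b * D2 a b) * (v j * v a * v b * K v) := by
      rw [hS2]
      simp only [Finset.mul_sum]
      exact Finset.sum_congr rfl fun a _ => Finset.sum_congr rfl fun b _ => by ring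
    calc K v * (h j * v j) * f (fun i => x i + h i * v i)
        = K v * (h j * v j) * f x + (K v * (h j * v j) * S1)
          + (K v * (h j * v j) * ((1/2) * S2)) + rem v := by
          rw [hx, hfu, hrem_def]; ring
      _ = base v + rem v := by
          rw [e2, e3]
          simp only [hbase_def]
          ring
  -- integrability
  have hbase_int : Integrable base := by
    refine (((hK_mom1_int j).const_mul _).add
      (integrable_finset_sum _ fun a _ => (hK_mom2_int j a).const_mul _)).add
      (integrable_finset_sum _ fun a _ =>
        integrable_finset_sum _ fun b _ => (hK_mom3_int j a b).const_mul _)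
  have hmaj_int : Integrable maj := by
    refine integrable_finset_sum _ fun a _ => integrable_finset_sum _ fun b _ =>
      integrable_finset_sum _ fun c _ => (hK_mom4_int j a b c).const_mul _
  -- pointwise bound on the remainder
  have hRb : ∀ v, |rem v| ≤ maj v := by
    intro v
    have hT := taylor2_bound f hf M₃ hM₃ x (u v)
    have habs : ∀ a, |u v a| = h a * |v a| := by
      intro a
      rw [hu_def]
      simp [abs_mul, abs_of_pos (hh a)]
    have hTb : |R v| ≤ M₃ / 6 * ∑ a, ∑ b, ∑ c, (h a * |v a|) * (h b * |v b|) * (h c * |v c|) := by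
      refine le_trans hT (le_of_eq ?_)
      congr 1
      exact Finset.sum_congr rfl fun a _ => Finset.sum_congr rfl fun b _ =>
        Finset.sum_congr rfl fun c _ => by rw [habs, habs, habs]
    have h1 : |rem v| = K v * (h j * |v j|) * |R v| := by
      rw [hrem_def]
      rw [abs_mul, abs_mul, abs_of_nonneg (hK_nonneg v), abs_mul, abs_of_pos (hh j)]
    rw [h1]
    calc K v * (h j * |v j|) * |R v|
        ≤ K v * (h j * |v j|) * (M₃ / 6 * ∑ a, ∑ b, ∑ c,
            (h a * |v a|) * (h b * |v b|) * (h c * |v c|)) := by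
          exact mul_le_mul_of_nonneg_left hTb
            (mul_nonneg (hK_nonneg v) (mul_nonneg (hh j).le (abs_nonneg _)))
      _ = maj v := by
          rw [hmaj_def]
          simp only [Finset.mul_sum]
          refine Finset.sum_congr rfl fun a _ => Finset.sum_congr rfl fun b _ =>
            Finset.sum_congr rfl fun c _ => ?_
          rw [abs_mul, abs_mul, abs_mul]
          ring
  -- measurability and integrability of the remainder
  have hu_cont : Continuous u := by
    refine continuous_pi fun i => ?_
    exact (continuous_const.mul (continuous_apply i))
  have hR_cont : Continuous R := by
    rw [hR_def]
    refine (((hf.continuous.comp (continuous_const.add hu_cont)).sub continuous_const).sub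
      ((fderiv ℝ f x).continuous.comp hu_cont)).sub
      (continuous_const.mul ((iteratedFDeriv ℝ 2 f x).coe_continuous.comp
        (continuous_pi fun _ => hu_cont)))
  have hrem_meas : AEStronglyMeasurable rem := by
    have : rem = fun v => ((h j * v j) * R v) * K v := by
      funext v; rw [hrem_def]; ring
    rw [this]
    exact (((continuous_const.mul (continuous_apply j)).mul hR_cont).aestronglyMeasurable).mul
      hK_int.1
  have hrem_int : Integrable rem := by
    refine hmaj_int.mono' hrem_meas (Filter.Eventually.of_forall fun v => ?_)
    simpa [Real.norm_eq_abs] using hRb v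
  -- compute the base integral
  have hbase_val : ∫ v, base v = ν₂ * (h j) ^ 2 * Df j := by
    have g1 : Integrable (fun v : Fin d → ℝ => (h j * f x) * (v j * K v)) :=
      (hK_mom1_int j).const_mul _
    have g2 : Integrable (fun v : Fin d → ℝ =>
        ∑ a, (h j * h a * Df a) * (v j * v a * K v)) :=
      integrable_finset_sum _ fun a _ => (hK_mom2_int j a).const_mul _
    have g3 : Integrable (fun v : Fin d → ℝ =>
        ∑ a, ∑ b, (1/2 * h j * h a * h b * D2 a b) * (v j * v a * v b * K v)) :=
      integrable_finset_sum _ fun a _ =>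
        integrable_finset_sum _ fun b _ => (hK_mom3_int j a b).const_mul _
    have g12 : Integrable (fun v : Fin d → ℝ => (h j * f x) * (v j * K v)
        + ∑ a, (h j * h a * Df a) * (v j * v a * K v)) := g1.add g2
    have I1 : ∫ v : Fin d → ℝ, (h j * f x) * (v j * K v) = 0 := by
      rw [integral_const_mul, hK_mom1 j, mul_zero]
    have I2 : (∫ v : Fin d → ℝ, ∑ a, (h j * h a * Df a) * (v j * v a * K v))
        = ν₂ * (h j) ^ 2 * Df j := by
      rw [integral_finset_sum _ fun a _ => (hK_mom2_int j a).const_mul _]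
      simp only [integral_const_mul, hK_mom2]
      simp only [mul_ite, mul_zero, Finset.sum_ite_eq, Finset.mem_univ, if_true]
      ring
    have I3 : (∫ v : Fin d → ℝ,
        ∑ a, ∑ b, (1/2 * h j * h a * h b * D2 a b) * (v j * v a * v b * K v)) = 0 := by
      rw [integral_finset_sum _ fun a _ =>
        integrable_finset_sum _ fun b _ => (hK_mom3_int j a b).const_mul _]
      refine Finset.sum_eq_zero fun a _ => ?_
      rw [integral_finset_sum _ fun b _ => (hK_mom3_int j a b).const_mul _]
      refine Finset.sum_eq_zero fun b _ => ?_
      rw [integral_const_mul, hK_mom3, mul_zero]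
    have e : ∫ v, base v
        = (∫ v : Fin d → ℝ, ((h j * f x) * (v j * K v)
            + ∑ a, (h j * h a * Df a) * (v j * v a * K v)))
          + ∫ v : Fin d → ℝ,
            ∑ a, ∑ b, (1/2 * h j * h a * h b * D2 a b) * (v j * v a * v b * K v) :=
      integral_add g12 g3
    rw [e, integral_add g1 g2, I1, I2, I3]
    ring
  -- put everything together
  have hint_eq : (∫ v, K v * (h j * v j) * f (fun i => x i + h i * v i))
      = (∫ v, base v) + ∫ v, rem v := by
    rw [← integral_add hbase_int hrem_int]
    exact integral_congr_ae (Filter.Eventually.of_forall fun v => hsplit v)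
  rw [hint_eq, hbase_val]
  have hstep : |(ν₂ * h j ^ 2 * Df j + ∫ v, rem v) - ν₂ * h j ^ 2 * Df j| = |∫ v, rem v| := by
    congr 1; ring
  rw [hstep]
  calc |∫ v, rem v| ≤ ∫ v, |rem v| := by
        simpa [Real.norm_eq_abs] using norm_integral_le_integral_norm (μ := volume) rem
    _ ≤ ∫ v, maj v := integral_mono hrem_int.abs hmaj_int hRb
    _ = M₃ / 6 * h j * ∑ a, ∑ b, ∑ c,
        h a * h b * h c * ∫ v, |v j * v a * v b * v c| * K v := by
      rw [hmaj_def]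
      rw [integral_finset_sum _ fun a _ => integrable_finset_sum _ fun b _ =>
        integrable_finset_sum _ fun c _ => (hK_mom4_int j a b c).const_mul _]
      simp only [Finset.mul_sum]
      refine Finset.sum_congr rfl fun a _ => ?_
      rw [integral_finset_sum _ fun b _ =>
        integrable_finset_sum _ fun c _ => (hK_mom4_int j a b c).const_mul _]
      refine Finset.sum_congr rfl fun b _ => ?_
      rw [integral_finset_sum _ fun c _ => (hK_mom4_int j a b c).const_mul _]
      refine Finset.sum_congr rfl fun c _ => ?_
      rw [integral_const_mul]
      ring
end

section
/- Let K : ℝ^d → ℝ be nonnegative and integrable with ∫ K(v) dv = 1, ∫ v_j K(v) dv = 0 for all j, ∫ v_j v_k K(v) dv = ν₂ δ_{jk} for a constant ν₂ and all j,k, ∫ v_a v_b v_c K(v) dv = 0 for all triples (a,b,c), and with finite mixed fourth absolute moments ∫ |v_j v_k v_a v_b| K(v) dv < ∞. Let f : ℝ^d → ℝ be twice continuously differentiable with all second-order partial derivatives uniformly bounded in absolute value by M₂. Let h₁,…,h_d > 0 and H^{1/2} = diag(h₁,…,h_d). Then for every x ∈ ℝ^d and all indices j,k, | ∫ K(v)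 h_j v_j h_k v_k f(x + H^{1/2} v) dv − ν₂ f(x) h_j² δ_{jk} | ≤ (M₂/2) · h_j h_k · Σ_{a,b=1}^d h_a h_b ∫ |v_j v_k v_a v_b| K(v) dv. -/
open MeasureTheory

lemma taylor2 {d : ℕ} (f : (Fin d → ℝ) → ℝ) (hf : ContDiff ℝ 2 f) (M₂ : ℝ)
    (hM₂ : ∀ y a b, |iteratedFDeriv ℝ 2 f y ![Pi.single a 1, Pi.single b 1]| ≤ M₂)
    (x u : Fin d → ℝ) :
    |f (x + u) - f x - fderiv ℝ f x u| ≤ M₂ / 2 * (∑ a, |u a|) ^ 2 := by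
  have hfd : Differentiable ℝ f := hf.differentiable (by norm_num)
  rw [show (2 : WithTop ℕ∞) = 1 + 1 from by norm_num] at hf
  have hf1 : ContDiff ℝ 1 (fderiv ℝ f) := (contDiff_succ_iff_fderiv.mp hf).2.2
  have hD2 : ∀ y, HasFDerivAt (fderiv ℝ f) (fderiv ℝ (fderiv ℝ f) y) y := fun y =>
    ((hf1.differentiable (by norm_num)) y).hasFDerivAt
  set C := M₂ * (∑ a, |u a|) ^ 2 with hC
  -- bilinear expansion bound
  have key : ∀ y : Fin d → ℝ, |fderiv ℝ (fderiv ℝ f) y u u| ≤ C := by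
    intro y
    set B := fderiv ℝ (fderiv ℝ f) y with hB
    have hu : u = ∑ a, u a • (Pi.single a 1 : Fin d → ℝ) := by
      ext b
      simp [Finset.sum_apply, Pi.single_apply]
    have hexp : B u u = ∑ a, ∑ b, u a * (u b * B (Pi.single a 1) (Pi.single b 1)) := by
      conv_lhs => rw [hu]
      simp [map_sum, ContinuousLinearMap.sum_apply, _root_.map_smul,
        ContinuousLinearMap.smul_apply, smul_eq_mul, Finset.mul_sum]
      rw [Finset.sum_comm]
      exact Finset.sum_congr rfl fun a _ => Finset.sum_congr rfl fun b _ => by ring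
    have hBab : ∀ a b, |B (Pi.single a 1) (Pi.single b 1)| ≤ M₂ := by
      intro a b
      have := hM₂ y a b
      rwa [iteratedFDeriv_two_apply, Matrix.cons_val_zero, Matrix.cons_val_one,
        Matrix.cons_val_zero] at this
    rw [hexp, hC]
    calc |∑ a, ∑ b, u a * (u b * B (Pi.single a 1) (Pi.single b 1))|
        ≤ ∑ a, ∑ b, |u a * (u b * B (Pi.single a 1) (Pi.single b 1))| := by
          refine (Finset.abs_sum_le_sum_abs _ _).trans ?_
          exact Finset.sum_le_sum fun a _ => Finset.abs_sum_le_sum_abs _ _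
      _ ≤ ∑ a, ∑ b, |u a| * (|u b| * M₂) := by
          refine Finset.sum_le_sum fun a _ => Finset.sum_le_sum fun b _ => ?_
          rw [abs_mul, abs_mul]
          exact mul_le_mul_of_nonneg_left
            (mul_le_mul_of_nonneg_left (hBab a b) (abs_nonneg _)) (abs_nonneg _)
      _ = M₂ * (∑ a, |u a|) ^ 2 := by
          rw [sq, Finset.sum_mul_sum]
          rw [Finset.mul_sum]
          refine Finset.sum_congr rfl fun a _ => ?_
          rw [Finset.mul_sum]
          exact Finset.sum_congr rfl fun b _ => by ring
  have hline : ∀ t : ℝ, HasDerivAt (fun s : ℝ => x + s • u) u t := by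
    intro t
    have := ((hasDerivAt_id t).smul_const u).const_add x
    simpa using this
  set G : ℝ → ℝ := fun t => fderiv ℝ f (x + t • u) u with hGdef
  have hG : ∀ t, HasDerivAt G (fderiv ℝ (fderiv ℝ f) (x + t • u) u u) t := by
    intro t
    have h1 : HasDerivAt (fun s : ℝ => fderiv ℝ f (x + s • u))
        ((fderiv ℝ (fderiv ℝ f) (x + t • u)) u) t :=
      (hD2 (x + t • u)).comp_hasDerivAt t (hline t)
    have := h1.clm_apply (hasDerivAt_const t u)
    simpa using this
  set g : ℝ → ℝ := fun t => f (x + t • u) with hgdef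
  have hg : ∀ t, HasDerivAt g (G t) t := fun t =>
    (hfd (x + t • u)).hasFDerivAt.comp_hasDerivAt t (hline t)
  have hGb : ∀ t ∈ Set.Icc (0:ℝ) 1, |G t - G 0| ≤ C * t := by
    intro t ht
    have := Convex.norm_image_sub_le_of_norm_hasDerivWithin_le
      (f := G) (f' := fun s => fderiv ℝ (fderiv ℝ f) (x + s • u) u u)
      (fun s _ => (hG s).hasDerivWithinAt)
      (fun s _ => by simpa [Real.norm_eq_abs] using key (x + s • u))
      (convex_Icc 0 1) (Set.left_mem_Icc.mpr zero_le_one) ht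
    simpa [Real.norm_eq_abs, abs_of_nonneg ht.1] using this
  -- comparison argument
  have main : ∀ (ε : ℝ), ε = 1 ∨ ε = -1 →
      ε * (g 1 - g 0 - G 0) ≤ C / 2 := by
    intro ε hε
    set ψ : ℝ → ℝ := fun t => C / 2 * t ^ 2 - ε * (g t - g 0 - t * G 0) with hψdef
    have hψ' : ∀ t, HasDerivAt ψ (C * t - ε * (G t - G 0)) t := by
      intro t
      have h1 : HasDerivAt (fun t : ℝ => C / 2 * t ^ 2) (C / 2 * (2 * t)) t := by
        simpa using ((hasDerivAt_pow 2 t).const_mul (C / 2))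
      have h2 : HasDerivAt (fun t : ℝ => ε * (g t - g 0 - t * G 0))
          (ε * (G t - G 0)) t := by
        have := (((hg t).sub_const (g 0)).sub ((hasDerivAt_id t).mul_const (G 0))).const_mul ε
        simpa using this
      have := h1.sub h2
      convert this using 1
      · rfl
      · rfl
      · rfl
      · ring
    have hmono : MonotoneOn ψ (Set.Icc 0 1) := by
      apply monotoneOn_of_deriv_nonneg (convex_Icc 0 1)
      · exact fun t _ => ((hψ' t).continuousAt).continuousWithinAt
      · exact fun t _ => ((hψ' t).differentiableAt).differentiableWithinAt
      · intro t ht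
        rw [interior_Icc] at ht
        rw [(hψ' t).deriv]
        have hε1 : |ε| = 1 := by rcases hε with h | h <;> simp [h]
        have h1 : ε * (G t - G 0) ≤ |G t - G 0| := by
          calc ε * (G t - G 0) ≤ |ε * (G t - G 0)| := le_abs_self _
            _ = |G t - G 0| := by rw [abs_mul, hε1, one_mul]
        have h2 := hGb t ⟨ht.1.le, ht.2.le⟩
        linarith
    have h01 := hmono (Set.left_mem_Icc.mpr zero_le_one)
      (Set.right_mem_Icc.mpr zero_le_one) zero_le_one
    simp only [hψdef] at h01
    nlinarith [h01]
  have hg1 : g 1 = f (x + u) := by simp [hgdef]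
  have hg0 : g 0 = f x := by simp [hgdef]
  have hG0 : G 0 = fderiv ℝ f x u := by simp [hGdef]
  have p := main 1 (Or.inl rfl)
  have m := main (-1) (Or.inr rfl)
  rw [hg1, hg0, hG0] at p m
  rw [abs_le]
  constructor <;> [nlinarith [m]; nlinarith [p]]

/-- Second-moment expansion (analysis of `A₂₂` in the proof of Theorem 5.1): for a
nonnegative kernel `K` with unit mass, zero odd moments, `∫ v_j v_k K = ν₂ δ_{jk}` and
finite mixed fourth absolute moments, and `f` twice continuously differentiable with
second partials bounded by `M₂`,
`|∫ K(v) h_j v_j h_k v_k f(x + H^{1/2}v) dv − ν₂ f(x) h_j² δ_{jk}|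
   ≤ (M₂/2) h_j h_k ∑_{a,b} h_a h_b ∫ |v_j v_k v_a v_b| K(v) dv`. -/
theorem kernel_second_moment_expansion (d : ℕ) (K : (Fin d → ℝ) → ℝ)
    (hK_nonneg : ∀ v, 0 ≤ K v) (hK_int : Integrable K)
    (hK_mass : ∫ v, K v = 1)
    (hK_mom1_int : ∀ j, Integrable (fun v => v j * K v))
    (hK_mom1 : ∀ j, ∫ v, v j * K v = 0)
    (ν₂ : ℝ)
    (hK_mom2_int : ∀ j k, Integrable (fun v => v j * v k * K v))
    (hK_mom2 : ∀ j k, ∫ v, v j * v k * K v = if j = k then ν₂ else 0)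
    (hK_mom3_int : ∀ a b c, Integrable (fun v => v a * v b * v c * K v))
    (hK_mom3 : ∀ a b c, ∫ v, v a * v b * v c * K v = 0)
    (hK_mom4_int : ∀ a b c e, Integrable (fun v => |v a * v b * v c * v e| * K v))
    (f : (Fin d → ℝ) → ℝ) (hf : ContDiff ℝ 2 f)
    (M₂ : ℝ)
    (hM₂ : ∀ y a b, |iteratedFDeriv ℝ 2 f y ![Pi.single a 1, Pi.single b 1]| ≤ M₂)
    (h : Fin d → ℝ) (hh : ∀ j, 0 < h j) (x : Fin d → ℝ) (j k : Fin d) :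
    |(∫ v, K v * (h j * v j) * (h k * v k) * f (fun i => x i + h i * v i)) -
        ν₂ * f x * (h j) ^ 2 * (if j = k then 1 else 0)| ≤
      M₂ / 2 * (h j * h k) * ∑ a, ∑ b,
        h a * h b * ∫ v, |v j * v k * v a * v b| * K v := by
  set u : (Fin d → ℝ) → (Fin d → ℝ) := fun v i => h i * v i with hudef
  set R : (Fin d → ℝ) → ℝ := fun v => f (x + u v) - f x - fderiv ℝ f x (u v) with hRdef
  set c : Fin d → ℝ := fun a => fderiv ℝ f x (Pi.single a 1) with hcdef
  have hDfu : ∀ v, fderiv ℝ f x (u v) = ∑ a, (h a * v a) * c a := by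
    intro v
    have hu : u v = ∑ a, (h a * v a) • (Pi.single a 1 : Fin d → ℝ) := by
      ext b
      simp [Finset.sum_apply, Pi.single_apply, hudef]
    rw [hu, map_sum]
    exact Finset.sum_congr rfl fun a _ => by rw [_root_.map_smul, smul_eq_mul]
  have hR : ∀ v, |R v| ≤ M₂ / 2 * (∑ a, h a * |v a|) ^ 2 := by
    intro v
    have := taylor2 f hf M₂ hM₂ x (u v)
    have habs : ∑ a, |u v a| = ∑ a, h a * |v a| :=
      Finset.sum_congr rfl fun a _ => by
        rw [hudef]; simp [abs_mul, abs_of_pos (hh a)]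
    rwa [habs] at this
  -- pointwise decomposition
  have hxplus : ∀ v, (fun i => x i + h i * v i) = x + u v := fun v => rfl
  set F3 : (Fin d → ℝ) → ℝ := fun v => (v j * v k * K v) * R v with hF3def
  have hpt : ∀ v, K v * (h j * v j) * (h k * v k) * f (fun i => x i + h i * v i) =
      (h j * h k) * (f x * (v j * v k * K v) +
        (∑ a, (h a * c a) * (v j * v k * v a * K v)) + F3 v) := by
    intro v
    rw [hxplus v]
    have hfv : f (x + u v) = f x + (∑ a, (h a * v a) * c a) + R v := by
      simp only [hRdef]
      rw [← hDfu v]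
      ring
    have hS : (h j * h k) * ∑ a, (h a * c a) * (v j * v k * v a * K v) =
        K v * (h j * v j) * (h k * v k) * ∑ a, (h a * v a) * c a := by
      rw [Finset.mul_sum, Finset.mul_sum]
      exact Finset.sum_congr rfl fun a _ => by ring
    simp only [hF3def]
    rw [hfv]
    linear_combination -hS
  -- integrabilities
  have iF1 : Integrable (fun v => f x * (v j * v k * K v)) := (hK_mom2_int j k).const_mul _
  have iF2 : Integrable (fun v => ∑ a, (h a * c a) * (v j * v k * v a * K v)) :=
    integrable_finset_sum _ fun a _ => (hK_mom3_int j k a).const_mul _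
  set g : (Fin d → ℝ) → ℝ := fun v =>
    M₂ / 2 * ∑ a, ∑ b, (h a * h b) * (|v j * v k * v a * v b| * K v) with hgdef
  have ig : Integrable g :=
    (integrable_finset_sum _ fun a _ => integrable_finset_sum _ fun b _ =>
      (hK_mom4_int j k a b).const_mul _).const_mul _
  have hgeq : ∀ v, g v = (|v j * v k| * K v) * (M₂ / 2 * (∑ a, h a * |v a|) ^ 2) := by
    intro v
    have e1 : ∑ a, ∑ b, (h a * h b) * (|v j * v k * v a * v b| * K v)
        = (|v j * v k| * K v) * ((∑ a, h a * |v a|) * (∑ b, h b * |v b|)) := by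
      rw [Finset.sum_mul_sum, Finset.mul_sum]
      refine Finset.sum_congr rfl fun a _ => ?_
      rw [Finset.mul_sum]
      refine Finset.sum_congr rfl fun b _ => ?_
      rw [abs_mul, abs_mul]
      ring
    simp only [hgdef]
    rw [e1]
    ring
  have hbound : ∀ v, ‖F3 v‖ ≤ g v := by
    intro v
    rw [hF3def, hgeq v, Real.norm_eq_abs, abs_mul]
    have h1 : |v j * v k * K v| = |v j * v k| * K v := by
      rw [abs_mul, abs_of_nonneg (hK_nonneg v)]
    rw [h1]
    exact mul_le_mul_of_nonneg_left (hR v)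
      (mul_nonneg (abs_nonneg _) (hK_nonneg v))
  have hRcont : Continuous R := by
    have hu_cont : Continuous u :=
      continuous_pi fun i => (continuous_const.mul (continuous_apply i))
    rw [hRdef]
    exact ((hf.continuous.comp (continuous_const.add hu_cont)).sub
      continuous_const).sub ((fderiv ℝ f x).continuous.comp hu_cont)
  have iF3 : Integrable F3 := by
    refine Integrable.mono' ig ?_ (Filter.Eventually.of_forall hbound)
    exact ((hK_mom2_int j k).aestronglyMeasurable.mul hRcont.aestronglyMeasurable)
  -- compute the integral
  set E := ∫ v, F3 v with hEdef
  have hint : (∫ v, K v * (h j * v j) * (h k * v k) * f (fun i => x i + h i * v i)) =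
      (h j * h k) * (f x * (if j = k then ν₂ else 0) + 0 + E) := by
    rw [show (fun v => K v * (h j * v j) * (h k * v k) * f (fun i => x i + h i * v i)) =
        fun v => (h j * h k) * (f x * (v j * v k * K v) +
          (∑ a, (h a * c a) * (v j * v k * v a * K v)) + F3 v) from funext hpt]
    have iF12 : Integrable (fun v => f x * (v j * v k * K v) +
        ∑ a, (h a * c a) * (v j * v k * v a * K v)) := iF1.add iF2
    rw [integral_const_mul, integral_add iF12 iF3, integral_add iF1 iF2,
      integral_const_mul, hK_mom2 j k,
      integral_finset_sum _ fun a _ => (hK_mom3_int j k a).const_mul _]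
    simp only [integral_const_mul, hK_mom3, mul_zero, Finset.sum_const_zero]
    rfl
  have hEbound : |E| ≤ M₂ / 2 * ∑ a, ∑ b, (h a * h b) * ∫ v, |v j * v k * v a * v b| * K v := by
    have h1 : |E| ≤ ∫ v, g v := by
      have h0 : ‖∫ v, F3 v‖ ≤ ∫ v, ‖F3 v‖ := norm_integral_le_integral_norm _
      rw [Real.norm_eq_abs] at h0
      exact h0.trans (integral_mono iF3.norm ig hbound)
    have h2 : (∫ v, g v) = M₂ / 2 * ∑ a, ∑ b, (h a * h b) *
        ∫ v, |v j * v k * v a * v b| * K v := by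
      simp only [hgdef]
      rw [integral_const_mul,
        integral_finset_sum _ fun a _ => integrable_finset_sum _ fun b _ =>
          (hK_mom4_int j k a b).const_mul _]
      congr 1
      refine Finset.sum_congr rfl fun a _ => ?_
      rw [integral_finset_sum _ fun b _ => (hK_mom4_int j k a b).const_mul _]
      exact Finset.sum_congr rfl fun b _ => by rw [integral_const_mul]
    rw [← h2]; exact h1
  rw [hint]
  have hjk : 0 < h j * h k := mul_pos (hh j) (hh k)
  have hLHS : |(h j * h k) * (f x * (if j = k then ν₂ else 0) + 0 + E) -
      ν₂ * f x * (h j) ^ 2 * (if j = k then 1 else 0)| = (h j * h k) * |E| := by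
    by_cases hc : j = k
    · subst hc
      simp only [eq_self_iff_true, if_true]
      rw [show h j * h j * (f x * ν₂ + 0 + E) - ν₂ * f x * (h j) ^ 2 * 1 =
        (h j * h j) * E from by ring, abs_mul, abs_of_pos (mul_pos (hh j) (hh j))]
    · simp only [if_neg hc]
      rw [show h j * h k * (f x * 0 + 0 + E) - ν₂ * f x * (h j) ^ 2 * 0 =
        (h j * h k) * E from by ring, abs_mul, abs_of_pos hjk]
  rw [hLHS]
  calc (h j * h k) * |E| ≤ (h j * h k) * (M₂ / 2 * ∑ a, ∑ b, (h a * h b) *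
      ∫ v, |v j * v k * v a * v b| * K v) :=
        mul_le_mul_of_nonneg_left hEbound hjk.le
    _ = M₂ / 2 * (h j * h k) * ∑ a, ∑ b,
        h a * h b * ∫ v, |v j * v k * v a * v b| * K v := by ring
end

section
/- Let X₁,…,X_n be fixed points in ℝ^d, let m : ℝ^d → ℝ be differentiable with ‖∇m(x)‖ ≤ L for all x ∈ ℝ^d, and let Y_i = m(X_i) + ε_i where ε₁,…,ε_n are independent N(0, σ²) random variables. Let ℰ be a set of J pairs (i,ℓ) with i < ℓ such that ‖X_i − X_ℓ‖ ≤ D for all (i,ℓ) ∈ ℰ, and define σ̂² = (1/(2J)) Σ_{(i,ℓ)∈ℰ} (Y_i − Y_ℓ)². Then 0 ≤ E[σ̂²] − σ² ≤ L²D²/2. -/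
open MeasureTheory ProbabilityTheory Real Set
open scoped NNReal ENNReal

section GaussAux

lemma riceAux_odd_gauss (b : ℝ) : ∫ x : ℝ, x * rexp (-b * x ^ 2) = 0 := by
  have h := MeasureTheory.integral_neg_eq_self (fun x : ℝ => x * rexp (-b * x ^ 2)) volume
  simp only [neg_sq, neg_mul] at h
  rw [integral_neg] at h
  have e : (∫ x : ℝ, x * rexp (-b * x ^ 2)) = ∫ x : ℝ, x * rexp (-(b * x ^ 2)) := by
    simp [neg_mul]
  rw [e]; linarith

lemma riceAux_sq_gauss {b : ℝ} (hb : 0 < b) :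
    ∫ x : ℝ, x ^ 2 * rexp (-b * x ^ 2) = (1 / b) ^ ((3:ℝ)/2) * Real.sqrt π / 2 := by
  have habs : (∫ x : ℝ, x ^ 2 * rexp (-b * x ^ 2))
      = ∫ x : ℝ, (fun y : ℝ => y ^ 2 * rexp (-b * y ^ 2)) |x| := by
    congr 1; ext x; simp [sq_abs]
  rw [habs, integral_comp_abs (f := fun y : ℝ => y ^ 2 * rexp (-b * y ^ 2))]
  have key := MeasureTheory.integral_comp_rpow_Ioi
    (fun u : ℝ => u ^ ((3:ℝ)/2 - 1) * rexp (-(b * u))) (p := 2) two_ne_zero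
  rw [Real.integral_rpow_mul_exp_neg_mul_Ioi (by norm_num) hb] at key
  have hΓ : Real.Gamma ((3:ℝ)/2) = Real.sqrt π / 2 := by
    have : ((3:ℝ)/2) = (1/2 : ℝ) + 1 := by norm_num
    rw [this, Real.Gamma_add_one (by norm_num), Real.Gamma_one_half_eq]
    ring
  have hLHS : ∫ x in Ioi (0:ℝ),
      (|(2:ℝ)| * x ^ ((2:ℝ) - 1)) • ((fun u : ℝ => u ^ ((3:ℝ)/2 - 1) * rexp (-(b * u))) (x ^ (2:ℝ)))
      = 2 * ∫ x in Ioi (0:ℝ), x ^ 2 * rexp (-b * x ^ 2) := by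
    rw [← integral_const_mul]
    refine setIntegral_congr_fun measurableSet_Ioi (fun x hx => ?_)
    have hx0 : (0:ℝ) < x := hx
    have h2 : x ^ (2:ℝ) = x ^ 2 := by rw [← Real.rpow_natCast x 2]; norm_num
    have h12 : (x ^ 2 : ℝ) ^ ((3:ℝ)/2 - 1) = x := by
      rw [← Real.rpow_natCast x 2, ← Real.rpow_mul hx0.le]
      norm_num
    have h1 : x ^ ((2:ℝ) - 1) = x := by norm_num
    simp only [smul_eq_mul, h2, h12, h1, abs_of_pos (by norm_num : (0:ℝ) < 2)]
    ring_nf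
  rw [hLHS, hΓ] at key
  rw [key]; ring

lemma riceAux_gauss_withDensity {v : ℝ≥0} (hv : v ≠ 0) (g : ℝ → ℝ) :
    ∫ x, g x ∂(gaussianReal 0 v) = ∫ x, gaussianPDFReal 0 v x * g x := by
  rw [gaussianReal_of_var_ne_zero _ hv]
  have : (gaussianPDF 0 v) = fun x => ((gaussianPDFReal 0 v x).toNNReal : ℝ≥0∞) := by
    ext x; rfl
  rw [this, integral_withDensity_eq_integral_smul
    ((measurable_gaussianPDFReal 0 v).real_toNNReal) g]
  congr 1; ext x
  rw [NNReal.smul_def, smul_eq_mul,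
    Real.coe_toNNReal _ (gaussianPDFReal_nonneg 0 v x)]

lemma riceAux_pdf_eq {v : ℝ≥0} (x : ℝ) :
    gaussianPDFReal 0 v x = (Real.sqrt (2 * π * v))⁻¹ * rexp (-(2 * (v:ℝ))⁻¹ * x ^ 2) := by
  rw [gaussianPDFReal]
  congr 1
  rw [sub_zero]
  congr 1
  by_cases h : (v:ℝ) = 0
  · simp [h]
  · field_simp

lemma riceAux_integrable_dirac (f : ℝ → ℝ) (a : ℝ) : Integrable f (Measure.dirac a) := by
  refine (integrable_const (f a)).congr ?_
  rw [MeasureTheory.ae_dirac_eq]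
  simp [Filter.EventuallyEq]

lemma riceAux_gauss_integrable_aux {v : ℝ≥0} (hv : v ≠ 0) (k : ℕ) :
    Integrable (fun x : ℝ => gaussianPDFReal 0 v x * x ^ k) := by
  have hb : (0:ℝ) < (2 * (v:ℝ))⁻¹ := by
    have : (0:ℝ) < (v:ℝ) := lt_of_le_of_ne (v.coe_nonneg) (by exact_mod_cast (Ne.symm hv))
    positivity
  have h := (integrable_rpow_mul_exp_neg_mul_sq hb (s := (k:ℝ))
    (by exact lt_of_lt_of_le (by norm_num) (Nat.cast_nonneg k))).const_mul
    ((Real.sqrt (2 * π * v))⁻¹)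
  refine h.congr ?_
  filter_upwards with x
  rw [riceAux_pdf_eq]
  rw [Real.rpow_natCast]
  ring

lemma riceAux_gauss_integrable_id {v : ℝ≥0} :
    Integrable (fun x : ℝ => x) (gaussianReal 0 v) := by
  by_cases hv : v = 0
  · rw [hv, gaussianReal_zero_var]; exact riceAux_integrable_dirac _ _
  · rw [gaussianReal_of_var_ne_zero _ hv,
      integrable_withDensity_iff (measurable_gaussianPDF 0 v)
        (ae_of_all _ fun x => ENNReal.ofReal_lt_top)]
    refine (riceAux_gauss_integrable_aux hv 1).congr ?_
    filter_upwards with x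
    simp [gaussianPDF, ENNReal.toReal_ofReal (gaussianPDFReal_nonneg 0 v x), mul_comm]

lemma riceAux_gauss_integrable_sq {v : ℝ≥0} :
    Integrable (fun x : ℝ => x ^ 2) (gaussianReal 0 v) := by
  by_cases hv : v = 0
  · rw [hv, gaussianReal_zero_var]; exact riceAux_integrable_dirac _ _
  · rw [gaussianReal_of_var_ne_zero _ hv,
      integrable_withDensity_iff (measurable_gaussianPDF 0 v)
        (ae_of_all _ fun x => ENNReal.ofReal_lt_top)]
    refine (riceAux_gauss_integrable_aux hv 2).congr ?_
    filter_upwards with x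
    simp [gaussianPDF, ENNReal.toReal_ofReal (gaussianPDFReal_nonneg 0 v x), mul_comm]

lemma riceAux_gauss_integral_id (v : ℝ≥0) : ∫ x, x ∂(gaussianReal 0 v) = 0 := by
  by_cases hv : v = 0
  · rw [hv, gaussianReal_zero_var]; simp
  · rw [riceAux_gauss_withDensity hv]
    have : ∀ x : ℝ, gaussianPDFReal 0 v x * x
        = (Real.sqrt (2 * π * v))⁻¹ * (x * rexp (-(2 * (v:ℝ))⁻¹ * x ^ 2)) := by
      intro x; rw [riceAux_pdf_eq]; ring
    simp_rw [this]
    rw [integral_const_mul, riceAux_odd_gauss]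
    ring

lemma riceAux_gauss_integral_sq (v : ℝ≥0) : ∫ x, x ^ 2 ∂(gaussianReal 0 v) = v := by
  by_cases hv : v = 0
  · rw [hv, gaussianReal_zero_var]; simp [hv]
  · have hv0 : (0:ℝ) < (v:ℝ) := lt_of_le_of_ne (v.coe_nonneg) (by exact_mod_cast (Ne.symm hv))
    have hb : (0:ℝ) < (2 * (v:ℝ))⁻¹ := by positivity
    rw [riceAux_gauss_withDensity hv]
    have : ∀ x : ℝ, gaussianPDFReal 0 v x * x ^ 2
        = (Real.sqrt (2 * π * v))⁻¹ * (x ^ 2 * rexp (-(2 * (v:ℝ))⁻¹ * x ^ 2)) := by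
      intro x; rw [riceAux_pdf_eq]; ring
    simp_rw [this]
    rw [integral_const_mul, riceAux_sq_gauss hb]
    have h1 : (1 / (2 * (v:ℝ))⁻¹) = 2 * (v:ℝ) := by field_simp
    rw [h1]
    set t : ℝ := 2 * (v:ℝ) with ht
    have ht0 : 0 < t := by positivity
    have h32 : t ^ ((3:ℝ)/2) = t * Real.sqrt t := by
      rw [show ((3:ℝ)/2) = 1 + 1/2 by norm_num, Real.rpow_add ht0, Real.rpow_one,
        ← Real.sqrt_eq_rpow]
    have h2 : Real.sqrt (2 * π * v) = Real.sqrt π * Real.sqrt t := by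
      rw [← Real.sqrt_mul pi_pos.le]
      congr 1; rw [ht]; ring
    rw [h32, h2]
    have hsp : Real.sqrt π ≠ 0 := by positivity
    have hst : Real.sqrt t ≠ 0 := by positivity
    field_simp
    ring

lemma riceAux_pair_integral {Ω : Type*} [MeasurableSpace Ω] (P : Measure Ω)
    [IsProbabilityMeasure P] (f g : Ω → ℝ) (hindep : IndepFun f g P)
    (hfi : Integrable f P) (hgi : Integrable g P)
    (hf2 : Integrable (fun ω => f ω ^ 2) P) (hg2 : Integrable (fun ω => g ω ^ 2) P)
    (hfm : ∫ ω, f ω ∂P = 0) (hgm : ∫ ω, g ω ∂P = 0) (a : ℝ) :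
    Integrable (fun ω => (a + (f ω - g ω)) ^ 2) P ∧
      ∫ ω, (a + (f ω - g ω)) ^ 2 ∂P = a ^ 2 + ((∫ ω, f ω ^ 2 ∂P) + ∫ ω, g ω ^ 2 ∂P) := by
  have hfg : Integrable (fun ω => f ω * g ω) P := hindep.integrable_mul hfi hgi
  have i1 : Integrable (fun ω => a ^ 2 + (2 * a) * f ω) P :=
    (integrable_const (a ^ 2)).add (hfi.const_mul (2 * a))
  have i2 : Integrable (fun ω => (a ^ 2 + (2 * a) * f ω) - (2 * a) * g ω) P :=
    i1.sub (hgi.const_mul (2 * a))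
  have i3 : Integrable (fun ω => ((a ^ 2 + (2 * a) * f ω) - (2 * a) * g ω) + f ω ^ 2) P :=
    i2.add hf2
  have i4 : Integrable (fun ω =>
      (((a ^ 2 + (2 * a) * f ω) - (2 * a) * g ω) + f ω ^ 2) - 2 * (f ω * g ω)) P :=
    i3.sub (hfg.const_mul 2)
  have i5 : Integrable (fun ω =>
      ((((a ^ 2 + (2 * a) * f ω) - (2 * a) * g ω) + f ω ^ 2) - 2 * (f ω * g ω)) + g ω ^ 2) P :=
    i4.add hg2
  have hexp : (fun ω => (a + (f ω - g ω)) ^ 2) = fun ω =>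
      ((((a ^ 2 + (2 * a) * f ω) - (2 * a) * g ω) + f ω ^ 2) - 2 * (f ω * g ω)) + g ω ^ 2 := by
    funext ω; ring
  refine ⟨hexp ▸ i5, ?_⟩
  have hmul : (∫ ω, f ω * g ω ∂P) = 0 := by
    have h := hindep.integral_fun_mul_eq_mul_integral hfi.aestronglyMeasurable hgi.aestronglyMeasurable
    rw [hfm, zero_mul] at h
    exact h
  rw [hexp, integral_add i4 hg2, integral_sub i3 (hfg.const_mul 2),
    integral_add i2 hf2, integral_sub i1 (hgi.const_mul (2 * a)),
    integral_add (integrable_const (a ^ 2)) (hfi.const_mul (2 * a)),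
    integral_const, integral_const_mul, integral_const_mul, integral_const_mul,
    hfm, hgm, hmul]
  simp
  ring

end GaussAux

/-- Bias bound for the difference-based variance estimator (Section 4.3): with
`Y i = m(X i) + ε i`, `ε i` i.i.d. `N(0, σ²)`, `m` differentiable with `‖∇m‖ ≤ L`, and
pairs `(i,ℓ) ∈ ℰ` satisfying `‖X i − X ℓ‖ ≤ D`, the estimator
`σ̂² = (1/(2J)) ∑_{(i,ℓ)∈ℰ} (Y i − Y ℓ)²` satisfies `0 ≤ E[σ̂²] − σ² ≤ L²D²/2`. -/
theorem rice_estimator_bias_bound {Ω : Type*} [MeasurableSpace Ω] (P : Measure Ω)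
    [IsProbabilityMeasure P] (n d : ℕ) (X : Fin n → EuclideanSpace ℝ (Fin d))
    (m : EuclideanSpace ℝ (Fin d) → ℝ) (hm : Differentiable ℝ m)
    (L : ℝ) (hL : ∀ x, ‖fderiv ℝ m x‖ ≤ L) (σ : ℝ)
    (ε : Fin n → Ω → ℝ) (hmeas : ∀ i, Measurable (ε i))
    (hindep : iIndepFun ε P)
    (hgauss : ∀ i, Measure.map (ε i) P = gaussianReal 0 ⟨σ ^ 2, sq_nonneg σ⟩)
    (Y : Fin n → Ω → ℝ) (hY : ∀ i ω, Y i ω = m (X i) + ε i ω)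
    (ℰ : Finset (Fin n × Fin n)) (hpairs : ∀ p ∈ ℰ, p.1 < p.2)
    (D : ℝ) (hD : ∀ p ∈ ℰ, ‖X p.1 - X p.2‖ ≤ D)
    (J : ℕ) (hJ : 0 < J) (hcard : ℰ.card = J) :
    0 ≤ (∫ ω, (1 / (2 * (J : ℝ))) * ∑ p ∈ ℰ, (Y p.1 ω - Y p.2 ω) ^ 2 ∂P) - σ ^ 2 ∧
      (∫ ω, (1 / (2 * (J : ℝ))) * ∑ p ∈ ℰ, (Y p.1 ω - Y p.2 ω) ^ 2 ∂P) - σ ^ 2 ≤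
        L ^ 2 * D ^ 2 / 2 := by
  set v : ℝ≥0 := ⟨σ ^ 2, sq_nonneg σ⟩ with hv
  have hvc : (v : ℝ) = σ ^ 2 := rfl
  -- moments and integrability of the noise
  have hε_int : ∀ i, Integrable (ε i) P := by
    intro i
    have h : Integrable (fun x : ℝ => x) (Measure.map (ε i) P) := by
      rw [hgauss i]; exact riceAux_gauss_integrable_id
    exact (integrable_map_measure aestronglyMeasurable_id (hmeas i).aemeasurable).mp h
  have hε_sq_int : ∀ i, Integrable (fun ω => ε i ω ^ 2) P := by
    intro i
    have h : Integrable (fun x : ℝ => x ^ 2) (Measure.map (ε i) P) := by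
      rw [hgauss i]; exact riceAux_gauss_integrable_sq
    exact (integrable_map_measure ((measurable_id.pow_const 2).aestronglyMeasurable)
      (hmeas i).aemeasurable).mp h
  have hε_mean : ∀ i, ∫ ω, ε i ω ∂P = 0 := by
    intro i
    have h := integral_map (μ := P) (hmeas i).aemeasurable
      (f := fun x : ℝ => x) aestronglyMeasurable_id
    rw [hgauss i, riceAux_gauss_integral_id] at h
    exact h.symm
  have hε_sq : ∀ i, ∫ ω, ε i ω ^ 2 ∂P = σ ^ 2 := by
    intro i
    have h := integral_map (μ := P) (hmeas i).aemeasurable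
      (f := fun x : ℝ => x ^ 2) ((measurable_id.pow_const 2).aestronglyMeasurable)
    rw [hgauss i, riceAux_gauss_integral_sq] at h
    rw [← h, hvc]
  -- per-pair integrability and value
  have hpair : ∀ p ∈ ℰ, Integrable (fun ω => (Y p.1 ω - Y p.2 ω) ^ 2) P ∧
      ∫ ω, (Y p.1 ω - Y p.2 ω) ^ 2 ∂P = (m (X p.1) - m (X p.2)) ^ 2 + 2 * σ ^ 2 := by
    intro p hp
    have hne : p.1 ≠ p.2 := (hpairs p hp).ne
    have hind : IndepFun (ε p.1) (ε p.2) P := hindep.indepFun hne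
    obtain ⟨hint, hval⟩ := riceAux_pair_integral P (ε p.1) (ε p.2) hind
      (hε_int p.1) (hε_int p.2) (hε_sq_int p.1) (hε_sq_int p.2)
      (hε_mean p.1) (hε_mean p.2) (m (X p.1) - m (X p.2))
    have heq : (fun ω => (Y p.1 ω - Y p.2 ω) ^ 2)
        = fun ω => ((m (X p.1) - m (X p.2)) + (ε p.1 ω - ε p.2 ω)) ^ 2 := by
      funext ω; rw [hY p.1 ω, hY p.2 ω]; ring
    refine ⟨heq ▸ hint, ?_⟩
    rw [heq, hval, hε_sq p.1, hε_sq p.2]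
    ring
  -- compute the expectation
  have hJ0 : (0:ℝ) < (J:ℝ) := by exact_mod_cast hJ
  have hcomp : (∫ ω, (1 / (2 * (J : ℝ))) * ∑ p ∈ ℰ, (Y p.1 ω - Y p.2 ω) ^ 2 ∂P)
      = (1 / (2 * (J:ℝ))) * ∑ p ∈ ℰ, ((m (X p.1) - m (X p.2)) ^ 2 + 2 * σ ^ 2) := by
    rw [integral_const_mul, integral_finset_sum ℰ (fun p hp => (hpair p hp).1)]
    congr 1
    exact Finset.sum_congr rfl fun p hp => (hpair p hp).2
  have hsum : ∑ p ∈ ℰ, ((m (X p.1) - m (X p.2)) ^ 2 + 2 * σ ^ 2)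
      = (∑ p ∈ ℰ, (m (X p.1) - m (X p.2)) ^ 2) + (J:ℝ) * (2 * σ ^ 2) := by
    rw [Finset.sum_add_distrib, Finset.sum_const, hcard]
    simp [nsmul_eq_mul]
  have hkey : (∫ ω, (1 / (2 * (J : ℝ))) * ∑ p ∈ ℰ, (Y p.1 ω - Y p.2 ω) ^ 2 ∂P) - σ ^ 2
      = (1 / (2 * (J:ℝ))) * ∑ p ∈ ℰ, (m (X p.1) - m (X p.2)) ^ 2 := by
    rw [hcomp, hsum]
    field_simp
    ring
  rw [hkey]
  have hS_nonneg : (0:ℝ) ≤ ∑ p ∈ ℰ, (m (X p.1) - m (X p.2)) ^ 2 :=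
    Finset.sum_nonneg fun p _ => sq_nonneg _
  constructor
  · positivity
  · -- per-pair bound
    have hbound : ∀ p ∈ ℰ, (m (X p.1) - m (X p.2)) ^ 2 ≤ L ^ 2 * D ^ 2 := by
      intro p hp
      have hL0 : (0:ℝ) ≤ L := le_trans (norm_nonneg _) (hL (X p.1))
      have h1 : ‖m (X p.1) - m (X p.2)‖ ≤ L * ‖X p.1 - X p.2‖ :=
        Convex.norm_image_sub_le_of_norm_fderiv_le (fun x _ => hm x)
          (fun x _ => hL x) convex_univ (mem_univ _) (mem_univ _)
      have h2 : ‖m (X p.1) - m (X p.2)‖ ≤ L * D :=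
        le_trans h1 (mul_le_mul_of_nonneg_left (hD p hp) hL0)
      have h3 : |m (X p.1) - m (X p.2)| ≤ L * D := by rwa [← Real.norm_eq_abs]
      calc (m (X p.1) - m (X p.2)) ^ 2 = |m (X p.1) - m (X p.2)| ^ 2 := (sq_abs _).symm
        _ ≤ (L * D) ^ 2 := pow_le_pow_left₀ (abs_nonneg _) h3 2
        _ = L ^ 2 * D ^ 2 := by ring
    have hsum_le : ∑ p ∈ ℰ, (m (X p.1) - m (X p.2)) ^ 2 ≤ (J:ℝ) * (L ^ 2 * D ^ 2) := by
      calc ∑ p ∈ ℰ, (m (X p.1) - m (X p.2)) ^ 2 ≤ ℰ.card • (L ^ 2 * D ^ 2) :=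
            Finset.sum_le_card_nsmul ℰ _ _ hbound
        _ = (J:ℝ) * (L ^ 2 * D ^ 2) := by rw [hcard, nsmul_eq_mul]
    calc (1 / (2 * (J:ℝ))) * ∑ p ∈ ℰ, (m (X p.1) - m (X p.2)) ^ 2
        ≤ (1 / (2 * (J:ℝ))) * ((J:ℝ) * (L ^ 2 * D ^ 2)) := by
          apply mul_le_mul_of_nonneg_left hsum_le
          positivity
      _ = L ^ 2 * D ^ 2 / 2 := by field_simp
end
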